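/- arXiv:1305.0848 — 6 statements merged into one kernel-verified Lean document; each statement's English description precedes it below -/
import Mathlib

section
/- If P_{ABE} is an unambiguous tripartite probability distribution (for every pair of values of two of the variables, at most one value of the third variable has nonzero probability), and a new joint distribution P_{AM,BM,EM} is formed by appending to all three parties a public message M generated from A via a conditional distribution q(m|a), then P_{AM,BM,EM} is also unambiguous. -/
/-- A tripartite probability distribution is *unambiguous* if for every pair of
values of two of the variables, at most one value of the third variable has
nonzero probability. -/
def Unambiguous {A B E : Type*} (p : A → B → E → ℝ) : Prop :=
  (∀ b e, {a | p a b e ≠ 0}.Subsingleton) ∧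
  (∀ a e, {b | p a b e ≠ 0}.Subsingleton) ∧
  (∀ a b, {e | p a b e ≠ 0}.Subsingleton)

/-- Appending a public message generated from `A` preserves unambiguity. -/
theorem stmt_0 {A B E M : Type*} [Fintype A] [Fintype B] [Fintype E] [Fintype M]
    [DecidableEq M]
    (p : A → B → E → ℝ) (q : M → A → ℝ)
    (hp0 : ∀ a b e, 0 ≤ p a b e)
    (hp1 : ∑ a, ∑ b, ∑ e, p a b e = 1)
    (hq0 : ∀ m a, 0 ≤ q m a)
    (hq1 : ∀ a, ∑ m, q m a = 1)
    (hunamb : Unambiguous p)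
    (p' : A × M → B × M → E × M → ℝ)
    (hp' : ∀ a m b m' e m'', p' (a, m) (b, m') (e, m'') =
      if m = m' ∧ m' = m'' then p a b e * q m a else 0) :
    Unambiguous p' := by
  obtain ⟨h1, h2, h3⟩ := hunamb
  have key : ∀ (a : A) (m : M) (b : B) (m' : M) (e : E) (m'' : M),
      p' (a, m) (b, m') (e, m'') ≠ 0 →
      m = m' ∧ m' = m'' ∧ p a b e ≠ 0 := by
    intro a m b m' e m'' h
    rw [hp' a m b m' e m''] at h
    by_cases hm : m = m' ∧ m' = m''
    · refine ⟨hm.1, hm.2, ?_⟩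
      intro hpz
      apply h
      rw [if_pos hm, hpz, zero_mul]
    · rw [if_neg hm] at h; exact absurd rfl h
  refine ⟨?_, ?_, ?_⟩
  · rintro ⟨b, m'⟩ ⟨e, m''⟩ ⟨a, m⟩ hx ⟨a2, m2⟩ hy
    obtain ⟨hm1, hm2, hpx⟩ := key a m b m' e m'' hx
    obtain ⟨hm1', hm2', hpy⟩ := key a2 m2 b m' e m'' hy
    have := h1 b e hpx hpy
    simp only [Prod.mk.injEq]
    exact ⟨this, hm1.trans hm1'.symm⟩
  · rintro ⟨a, m⟩ ⟨e, m''⟩ ⟨b, m'⟩ hx ⟨b2, m2⟩ hy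
    obtain ⟨hm1, hm2, hpx⟩ := key a m b m' e m'' hx
    obtain ⟨hm1', hm2', hpy⟩ := key a m b2 m2 e m'' hy
    have := h2 a e hpx hpy
    simp only [Prod.mk.injEq]
    exact ⟨this, hm1.symm.trans hm1'⟩
  · rintro ⟨a, m⟩ ⟨b, m'⟩ ⟨e, m''⟩ hx ⟨e2, m2⟩ hy
    obtain ⟨hm1, hm2, hpx⟩ := key a m b m' e m'' hx
    obtain ⟨hm1', hm2', hpy⟩ := key a m b m' e2 m2 hy
    have := h3 a b hpx hpy
    simp only [Prod.mk.injEq]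
    exact ⟨this, hm2.symm.trans hm2'⟩
end

section
/- If a tripartite distribution P_{ABE} satisfies the condition that for all b,e at most one a has p(a,b,e) ≠ 0, then the distribution P_{AM,BM,EM} obtained by appending a public message M generated from A also satisfies this same condition (the lemma holds separately for each of the three unambiguity conditions). -/
/-- If for all `b, e` at most one `a` has `p a b e ≠ 0`, then the distribution
obtained by appending a public message `M` generated from `A` satisfies the
same condition. -/
theorem stmt_1 {A B E M : Type*} [Fintype A] [Fintype B] [Fintype E] [Fintype M]
    [DecidableEq M]
    (p : A → B → E → ℝ) (q : M → A → ℝ)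
    (hp0 : ∀ a b e, 0 ≤ p a b e)
    (hp1 : ∑ a, ∑ b, ∑ e, p a b e = 1)
    (hq0 : ∀ m a, 0 ≤ q m a)
    (hq1 : ∀ a, ∑ m, q m a = 1)
    (hA : ∀ b e, {a | p a b e ≠ 0}.Subsingleton)
    (p' : A × M → B × M → E × M → ℝ)
    (hp' : ∀ a m b m' e m'', p' (a, m) (b, m') (e, m'') =
      if m = m' ∧ m' = m'' then p a b e * q m a else 0) :
    ∀ bm : B × M, ∀ em : E × M, {am : A × M | p' am bm em ≠ 0}.Subsingleton := by
  rintro ⟨b, mb⟩ ⟨e, me⟩ ⟨a, m⟩ ha ⟨a', m'⟩ ha'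
  simp only [Set.mem_setOf_eq, hp'] at ha ha'
  split_ifs at ha ha' with h h'
  · obtain ⟨rfl, rfl⟩ := h
    obtain ⟨rfl, _⟩ := h'
    have : p a b e ≠ 0 := fun h => ha (by simp [h])
    have : a = a' := hA b e this (fun h => ha' (by simp [h]))
    simp [this]
  all_goals first | exact absurd rfl ha | exact absurd rfl ha'
end

section
/- Let P_{ABE} be an unambiguous tripartite distribution. Then the conditional Shannon entropies satisfy H(B|A) = H(E|A), where entropies are computed with respect to the joint distribution p(a,b,e). -/
open Finset

/-- Shannon entropy of a finitely supported distribution (natural log). -/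
noncomputable def Hent {X : Type*} [Fintype X] (p : X → ℝ) : ℝ :=
  ∑ x, Real.negMulLog (p x)

lemma aux_negMulLog_sum {X : Type*} [Fintype X] (f : X → ℝ)
    (h : {x | f x ≠ 0}.Subsingleton) :
    Real.negMulLog (∑ x, f x) = ∑ x, Real.negMulLog (f x) := by
  by_cases hz : ∀ x, f x = 0
  · simp [hz]
  · push_neg at hz
    obtain ⟨x0, hx0⟩ := hz
    have hs : ∀ x, x ≠ x0 → f x = 0 := fun x hx => by
      by_contra hfx
      exact hx (h hfx hx0)
    rw [Finset.sum_eq_single x0 (fun x _ hx => hs x hx) (by simp),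
        Finset.sum_eq_single x0 (fun x _ hx => by rw [hs x hx, Real.negMulLog_zero])
          (by simp)]

/-- For an unambiguous tripartite distribution, `H(B|A) = H(E|A)`. -/
theorem stmt_2 {A B E : Type*} [Fintype A] [Fintype B] [Fintype E]
    (p : A → B → E → ℝ)
    (hp0 : ∀ a b e, 0 ≤ p a b e)
    (hp1 : ∑ a, ∑ b, ∑ e, p a b e = 1)
    (hunamb : Unambiguous p) :
    (Hent fun ab : A × B => ∑ e, p ab.1 ab.2 e) -
      (Hent fun a => ∑ b, ∑ e, p a b e) =
    (Hent fun ae : A × E => ∑ b, p ae.1 b ae.2) -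
      (Hent fun a => ∑ b, ∑ e, p a b e) := by
  congr 1
  rw [Hent, Hent, Fintype.sum_prod_type, Fintype.sum_prod_type]
  refine Finset.sum_congr rfl fun a _ => ?_
  calc ∑ b, Real.negMulLog (∑ e, p a b e)
      = ∑ b, ∑ e, Real.negMulLog (p a b e) :=
        Finset.sum_congr rfl fun b _ => aux_negMulLog_sum _ (hunamb.2.2 a b)
    _ = ∑ e, ∑ b, Real.negMulLog (p a b e) := Finset.sum_comm
    _ = ∑ e, Real.negMulLog (∑ b, p a b e) :=
        Finset.sum_congr rfl fun e _ => (aux_negMulLog_sum (fun b => p a b e) (hunamb.2.1 a e)).symm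
end

section
/- Let P_{ABE} be an unambiguous tripartite distribution, ψ_{ABE} the associated pure state, and ρ_{AB} = Tr_E |ψ⟩⟨ψ|. Then the coherent information I(A⟩B)_{ρ_{AB}} := S(ρ_B) − S(ρ_E) equals the classical advantage I(A;B) − I(A;E) of P_{ABE}, where S is von Neumann entropy and the right-hand side uses Shannon mutual informations of p. -/
open Finset

/-- Reduced density matrix on `B` of `|ψ⟩⟨ψ|` for `ψ = Σ √p(a,b,e)|a⟩|b⟩|e⟩`. -/
noncomputable def rhoB {A B E : Type*} [Fintype A] [Fintype E]
    (p : A → B → E → ℝ) : Matrix B B ℝ :=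
  Matrix.of fun b b' => ∑ a, ∑ e, Real.sqrt (p a b e) * Real.sqrt (p a b' e)

/-- Reduced density matrix on `E` of `|ψ⟩⟨ψ|`. -/
noncomputable def rhoE {A B E : Type*} [Fintype A] [Fintype B]
    (p : A → B → E → ℝ) : Matrix E E ℝ :=
  Matrix.of fun e e' => ∑ a, ∑ b, Real.sqrt (p a b e) * Real.sqrt (p a b e')

section aux
open Polynomial
lemma my_charpoly_conj {n : Type*} [Fintype n] [DecidableEq n]
    (U W D : Matrix n n ℝ) (h1 : U * W = 1) :
    (U * D * W).charpoly = D.charpoly := by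
  have hmapmul : ∀ (M N : Matrix n n ℝ), (M * N).map (C : ℝ →+* ℝ[X]) =
      M.map C * N.map C := fun M N => Matrix.map_mul
  have hone : (1 : Matrix n n ℝ).map (C : ℝ →+* ℝ[X]) = 1 :=
    Matrix.map_one _ (map_zero C) (map_one C)
  have hcomm : Matrix.scalar n (X : ℝ[X]) * W.map (C : ℝ →+* ℝ[X])
      = W.map C * Matrix.scalar n (X : ℝ[X]) :=
    (Matrix.scalar_commute (X : ℝ[X]) (fun r' => mul_comm _ _) (W.map C)).eq
  have hm : Matrix.charmatrix (U * D * W)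
      = U.map (C : ℝ →+* ℝ[X]) * Matrix.charmatrix D * W.map C := by
    unfold Matrix.charmatrix
    rw [mul_sub, sub_mul]
    congr 1
    · calc Matrix.scalar n (X : ℝ[X])
          = (U.map (C : ℝ →+* ℝ[X]) * W.map C) * Matrix.scalar n (X : ℝ[X]) := by
            rw [← hmapmul, h1, hone, one_mul]
        _ = U.map (C : ℝ →+* ℝ[X]) * Matrix.scalar n (X : ℝ[X]) * W.map C := by
            rw [mul_assoc, ← hcomm, mul_assoc]
    · simp only [RingHom.mapMatrix_apply]
      rw [hmapmul, hmapmul]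
  have hdet1 : (U.map (C : ℝ →+* ℝ[X])).det * (W.map (C : ℝ →+* ℝ[X])).det = 1 := by
    rw [← Matrix.det_mul, ← hmapmul, h1, hone, Matrix.det_one]
  rw [Matrix.charpoly, Matrix.charpoly, hm, Matrix.det_mul, Matrix.det_mul]
  ring_nf
  rw [mul_comm, ← mul_assoc, mul_comm (W.map (C : ℝ →+* ℝ[X])).det, hdet1, one_mul]

lemma charpoly_diag {n : Type*} [Fintype n] [DecidableEq n] (d : n → ℝ) :
    (Matrix.diagonal d).charpoly = ∏ i, (X - C (d i)) := by
  have : Matrix.charmatrix (Matrix.diagonal d)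
      = Matrix.diagonal (fun i => (X : ℝ[X]) - C (d i)) := by
    ext i j
    by_cases hij : i = j
    · subst hij; simp
    · simp [Matrix.charmatrix_apply_ne _ _ _ hij, Matrix.diagonal_apply_ne _ hij]
  rw [Matrix.charpoly, this, Matrix.det_diagonal]

lemma sum_f_eig {n : Type*} [Fintype n] [DecidableEq n]
    (d : n → ℝ) (h : (Matrix.diagonal d).IsHermitian) (f : ℝ → ℝ) :
    ∑ i, f (h.eigenvalues i) = ∑ i, f (d i) := by
  have hU := h.spectral_theorem
  rw [RCLike.ofReal_real_eq_id, Unitary.conjStarAlgAut_apply] at hU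
  have h1 : (h.eigenvectorUnitary : Matrix n n ℝ) *
      star (h.eigenvectorUnitary : Matrix n n ℝ) = 1 :=
    (Matrix.mem_unitaryGroup_iff).mp h.eigenvectorUnitary.2
  have hc : (∏ i, ((X : ℝ[X]) - C (d i))) = ∏ i, ((X : ℝ[X]) - C (h.eigenvalues i)) := by
    rw [← charpoly_diag, ← charpoly_diag]
    calc (Matrix.diagonal d).charpoly
        = ((h.eigenvectorUnitary : Matrix n n ℝ) *
            Matrix.diagonal (id ∘ h.eigenvalues) *
            star (h.eigenvectorUnitary : Matrix n n ℝ)).charpoly := by rw [← hU]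
      _ = (Matrix.diagonal (id ∘ h.eigenvalues)).charpoly := my_charpoly_conj _ _ _ h1
      _ = (Matrix.diagonal h.eigenvalues).charpoly := by rw [Function.id_comp]
  have hms : (Finset.univ.val.map d) = (Finset.univ.val.map h.eigenvalues) := by
    have hr : ∀ (g : n → ℝ), (∏ i, ((X : ℝ[X]) - C (g i))).roots = Finset.univ.val.map g := by
      intro g
      have : (∏ i, ((X : ℝ[X]) - C (g i)))
          = ((Finset.univ.val.map g).map (fun a => (X : ℝ[X]) - C a)).prod := by
        rw [Multiset.map_map]; rfl
      rw [this, roots_multiset_prod_X_sub_C]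
    rw [← hr d, ← hr h.eigenvalues, hc]
  calc ∑ i, f (h.eigenvalues i) = ((Finset.univ.val.map h.eigenvalues).map f).sum := by
        rw [Multiset.map_map]; rfl
    _ = ((Finset.univ.val.map d).map f).sum := by rw [hms]
    _ = ∑ i, f (d i) := by rw [Multiset.map_map]; rfl
end aux

lemma negMulLog_sum_collapse {X : Type*} [Fintype X] (q : X → ℝ)
    (hq : {x | q x ≠ 0}.Subsingleton) :
    Real.negMulLog (∑ x, q x) = ∑ x, Real.negMulLog (q x) := by
  by_cases hz : ∀ x, q x = 0
  · simp [hz]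
  · push_neg at hz
    obtain ⟨x0, hx0⟩ := hz
    have hother : ∀ x, x ≠ x0 → q x = 0 := fun x hx => by
      by_contra hne; exact hx (hq hne hx0)
    have hsum : ∑ x, q x = q x0 :=
      Finset.sum_eq_single x0 (fun x _ hx => hother x hx) (by simp)
    have hsum2 : ∑ x, Real.negMulLog (q x) = Real.negMulLog (q x0) :=
      Finset.sum_eq_single x0 (fun x _ hx => by rw [hother x hx, Real.negMulLog_zero])
        (by simp)
    rw [hsum, hsum2]

/-- Coherent information `I(A⟩B) = S(ρ_B) − S(ρ_E)` (von Neumann entropies,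
computed from the eigenvalues) equals the classical advantage
`I(A;B) − I(A;E)` of an unambiguous distribution. -/
theorem stmt_5 {A B E : Type*} [Fintype A] [Fintype B] [Fintype E]
    [DecidableEq B] [DecidableEq E]
    (p : A → B → E → ℝ)
    (hp0 : ∀ a b e, 0 ≤ p a b e)
    (hp1 : ∑ a, ∑ b, ∑ e, p a b e = 1)
    (hunamb : Unambiguous p)
    (hB : (rhoB p).IsHermitian) (hE : (rhoE p).IsHermitian) :
    (∑ i, Real.negMulLog (hB.eigenvalues i)) -
      (∑ j, Real.negMulLog (hE.eigenvalues j)) =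
    ((Hent fun a => ∑ b, ∑ e, p a b e) + (Hent fun b => ∑ a, ∑ e, p a b e)
        - (Hent fun ab : A × B => ∑ e, p ab.1 ab.2 e)) -
    ((Hent fun a => ∑ b, ∑ e, p a b e) + (Hent fun e => ∑ a, ∑ b, p a b e)
        - (Hent fun ae : A × E => ∑ b, p ae.1 b ae.2)) := by
  obtain ⟨hA', hB', hE'⟩ := hunamb
  set dB : B → ℝ := fun b => ∑ a, ∑ e, p a b e with hdB
  set dE : E → ℝ := fun e => ∑ a, ∑ b, p a b e with hdE
  have hBdiag : rhoB p = Matrix.diagonal dB := by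
    ext b b'
    by_cases hbb : b = b'
    · subst hbb
      simp only [rhoB, Matrix.of_apply, Matrix.diagonal_apply_eq]
      exact Finset.sum_congr rfl fun a _ => Finset.sum_congr rfl fun e _ =>
        Real.mul_self_sqrt (hp0 a b e)
    · simp only [rhoB, Matrix.of_apply, Matrix.diagonal_apply_ne _ hbb]
      apply Finset.sum_eq_zero; intro a _
      apply Finset.sum_eq_zero; intro e _
      by_cases h1 : p a b e = 0
      · rw [h1, Real.sqrt_zero, zero_mul]
      · have h2 : p a b' e = 0 := by
          by_contra h2; exact hbb (hB' a e h1 h2)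
        rw [h2, Real.sqrt_zero, mul_zero]
  have hEdiag : rhoE p = Matrix.diagonal dE := by
    ext e e'
    by_cases hee : e = e'
    · subst hee
      simp only [rhoE, Matrix.of_apply, Matrix.diagonal_apply_eq]
      exact Finset.sum_congr rfl fun a _ => Finset.sum_congr rfl fun b _ =>
        Real.mul_self_sqrt (hp0 a b e)
    · simp only [rhoE, Matrix.of_apply, Matrix.diagonal_apply_ne _ hee]
      apply Finset.sum_eq_zero; intro a _
      apply Finset.sum_eq_zero; intro b _
      by_cases h1 : p a b e = 0
      · rw [h1, Real.sqrt_zero, zero_mul]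
      · have h2 : p a b e' = 0 := by
          by_contra h2; exact hee (hE' a b h1 h2)
        rw [h2, Real.sqrt_zero, mul_zero]
  have keyB : ∑ i, Real.negMulLog (hB.eigenvalues i) = ∑ b, Real.negMulLog (dB b) := by
    have gen : ∀ (M : Matrix B B ℝ) (hM : M.IsHermitian), M = Matrix.diagonal dB →
        ∑ i, Real.negMulLog (hM.eigenvalues i) = ∑ b, Real.negMulLog (dB b) := by
      rintro M hM rfl
      exact sum_f_eig dB hM Real.negMulLog
    exact gen _ hB hBdiag
  have keyE : ∑ j, Real.negMulLog (hE.eigenvalues j) = ∑ e, Real.negMulLog (dE e) := by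
    have gen : ∀ (M : Matrix E E ℝ) (hM : M.IsHermitian), M = Matrix.diagonal dE →
        ∑ j, Real.negMulLog (hM.eigenvalues j) = ∑ e, Real.negMulLog (dE e) := by
      rintro M hM rfl
      exact sum_f_eig dE hM Real.negMulLog
    exact gen _ hE hEdiag
  have hAB : (Hent fun ab : A × B => ∑ e, p ab.1 ab.2 e)
      = ∑ a, ∑ b, ∑ e, Real.negMulLog (p a b e) := by
    rw [Hent, Fintype.sum_prod_type]
    exact Finset.sum_congr rfl fun a _ => Finset.sum_congr rfl fun b _ =>
      negMulLog_sum_collapse _ (hE' a b)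
  have hAE : (Hent fun ae : A × E => ∑ b, p ae.1 b ae.2)
      = ∑ a, ∑ b, ∑ e, Real.negMulLog (p a b e) := by
    rw [Hent, Fintype.sum_prod_type]
    have step : ∀ a, ∑ e, Real.negMulLog (∑ b, p a b e)
        = ∑ e, ∑ b, Real.negMulLog (p a b e) := fun a =>
      Finset.sum_congr rfl fun e _ => negMulLog_sum_collapse _ (hB' a e)
    calc ∑ a, ∑ e, Real.negMulLog (∑ b, p a b e)
        = ∑ a, ∑ e, ∑ b, Real.negMulLog (p a b e) :=
          Finset.sum_congr rfl fun a _ => step a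
      _ = ∑ a, ∑ b, ∑ e, Real.negMulLog (p a b e) :=
          Finset.sum_congr rfl fun a _ => Finset.sum_comm
  rw [keyB, keyE, hAB, hAE]
  simp only [Hent, hdB, hdE]
  ring
end

section
/- Let P_{ABE} be a tripartite distribution with: for all a,b, at most one e has p(a,b,e) ≠ 0. Define e(a,b) as the unique e with p(a,b,e) ≠ 0 (or a special 'null' value if none exists) and p(a,b) = Σ_e p(a,b,e). Then ρ_{AB} (the partial trace over E of the pure state √P_{ABE}) is PT-invariant if and only if the following holds: whenever e(a,b) = e(a',b') ≠ null for some a ≠ a' and b ≠ b', we have both (1) e(a,b') = e(a',b) ≠ null, and (2) p(a,b)·p(a',b') = p(a,b')·p(a',b). -/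
open Finset

noncomputable def rhoAB {A B E : Type*} [Fintype E]
    (p : A → B → E → ℝ) : Matrix (A × B) (A × B) ℝ :=
  Matrix.of fun x y => ∑ e, Real.sqrt (p x.1 x.2 e * p y.1 y.2 e)

/-- Partial transpose on the `B` system. -/
def ptB {A B : Type*} (ρ : Matrix (A × B) (A × B) ℝ) : Matrix (A × B) (A × B) ℝ :=
  Matrix.of fun x y => ρ (x.1, y.2) (y.1, x.2)

section Aux

variable {A B E : Type*} [Fintype E] {p : A → B → E → ℝ}

lemma sum_sqrt_some {eab : A → B → Option E}
    (heab : ∀ a b e, eab a b = some e ↔ p a b e ≠ 0)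
    {a a' : A} {b b' : B} {e₀ : E} (h1 : eab a b = some e₀) :
    ∑ e, Real.sqrt (p a b e * p a' b' e) = Real.sqrt (p a b e₀ * p a' b' e₀) := by
  apply Finset.sum_eq_single
  · intro e _ hne
    have hz : p a b e = 0 := by
      by_contra hp
      have h' := (heab a b e).mpr hp
      rw [h1] at h'
      exact hne (Option.some_inj.mp h').symm
    simp [hz]
  · intro h; exact absurd (Finset.mem_univ e₀) h

lemma sum_sqrt_zero {a a' : A} {b b' : B}
    (h : ¬ ∃ e, p a b e ≠ 0 ∧ p a' b' e ≠ 0) :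
    ∑ e, Real.sqrt (p a b e * p a' b' e) = 0 := by
  apply Finset.sum_eq_zero
  intro e _
  by_cases hx : p a b e = 0
  · simp [hx]
  · have hy : p a' b' e = 0 := by
      by_contra hy; exact h ⟨e, hx, hy⟩
    simp [hy]

lemma pab_eq {eab : A → B → Option E}
    (heab : ∀ a b e, eab a b = some e ↔ p a b e ≠ 0)
    {a : A} {b : B} {e₀ : E} (h1 : eab a b = some e₀) :
    ∑ e, p a b e = p a b e₀ := by
  apply Finset.sum_eq_single
  · intro e _ hne
    by_contra hp
    have h' := (heab a b e).mpr hp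
    rw [h1] at h'
    exact hne (Option.some_inj.mp h').symm
  · intro h; exact absurd (Finset.mem_univ e₀) h

end Aux

/-- Characterization of PT-invariance of `ρ_AB` in terms of the function
`e(a,b)` (here `eab : A → B → Option E`, with `none` playing the role of the
null symbol) and the reduced distribution `p(a,b)`:  `ρ_AB` is PT-invariant iff
whenever `e(a,b) = e(a',b') ≠ null` with `a ≠ a'` and `b ≠ b'`, we have
(1) `e(a,b') = e(a',b) ≠ null` and (2) `p(a,b)p(a',b') = p(a,b')p(a',b)`. -/
theorem stmt_7 {A B E : Type*} [Fintype A] [Fintype B] [Fintype E]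
    (p : A → B → E → ℝ)
    (hp0 : ∀ a b e, 0 ≤ p a b e)
    (hp1 : ∑ a, ∑ b, ∑ e, p a b e = 1)
    (hE : ∀ a b, {e | p a b e ≠ 0}.Subsingleton)
    (eab : A → B → Option E)
    (heab : ∀ a b e, eab a b = some e ↔ p a b e ≠ 0)
    (pab : A → B → ℝ)
    (hpab : ∀ a b, pab a b = ∑ e, p a b e) :
    ptB (rhoAB p) = rhoAB p ↔
      ∀ a a' b b' e₀, a ≠ a' → b ≠ b' →
        eab a b = some e₀ → eab a' b' = some e₀ →
        (eab a b' = eab a' b ∧ (eab a b').isSome ∧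
          pab a b * pab a' b' = pab a b' * pab a' b) := by
  have key : ptB (rhoAB p) = rhoAB p ↔
      ∀ (a a' : A) (b b' : B),
        (∑ e, Real.sqrt (p a b' e * p a' b e)) = ∑ e, Real.sqrt (p a b e * p a' b' e) := by
    constructor
    · intro h a a' b b'
      have := congrFun (congrFun h (a, b)) (a', b')
      simpa [ptB, rhoAB] using this
    · intro h
      ext ⟨a, b⟩ ⟨a', b'⟩
      simpa [ptB, rhoAB] using h a a' b b'
  rw [key]
  constructor
  · intro h a a' b b' e₀ ha hb h1 h2
    have hpe0 : p a b e₀ ≠ 0 := (heab a b e₀).mp h1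
    have hpe0' : p a' b' e₀ ≠ 0 := (heab a' b' e₀).mp h2
    have hpos : 0 < p a b e₀ * p a' b' e₀ :=
      mul_pos (lt_of_le_of_ne (hp0 a b e₀) (Ne.symm hpe0))
        (lt_of_le_of_ne (hp0 a' b' e₀) (Ne.symm hpe0'))
    have hRHS : ∑ e, Real.sqrt (p a b e * p a' b' e) = Real.sqrt (p a b e₀ * p a' b' e₀) :=
      sum_sqrt_some heab h1
    have hL := h a a' b b'
    have hLne : (∑ e, Real.sqrt (p a b' e * p a' b e)) ≠ 0 := by
      rw [hL, hRHS]
      exact ne_of_gt (Real.sqrt_pos.mpr hpos)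
    obtain ⟨e₁, _, hterm⟩ := Finset.exists_ne_zero_of_sum_ne_zero hLne
    have hprodne : p a b' e₁ * p a' b e₁ ≠ 0 := by
      intro hz; exact hterm (by rw [hz, Real.sqrt_zero])
    have hx : p a b' e₁ ≠ 0 := (mul_ne_zero_iff.mp hprodne).1
    have hy : p a' b e₁ ≠ 0 := (mul_ne_zero_iff.mp hprodne).2
    have h3 : eab a b' = some e₁ := (heab a b' e₁).mpr hx
    have h4 : eab a' b = some e₁ := (heab a' b e₁).mpr hy
    refine ⟨h3.trans h4.symm, by rw [h3]; rfl, ?_⟩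
    have hLHS : ∑ e, Real.sqrt (p a b' e * p a' b e) = Real.sqrt (p a b' e₁ * p a' b e₁) :=
      sum_sqrt_some heab h3
    have hsq : Real.sqrt (p a b' e₁ * p a' b e₁) = Real.sqrt (p a b e₀ * p a' b' e₀) := by
      rw [← hLHS, ← hRHS]; exact hL
    have hprod : p a b' e₁ * p a' b e₁ = p a b e₀ * p a' b' e₀ := by
      have h5 : 0 ≤ p a b' e₁ * p a' b e₁ := mul_nonneg (hp0 _ _ _) (hp0 _ _ _)
      have h6 : 0 ≤ p a b e₀ * p a' b' e₀ := le_of_lt hpos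
      calc p a b' e₁ * p a' b e₁ = Real.sqrt (p a b' e₁ * p a' b e₁) ^ 2 := by
            rw [Real.sq_sqrt h5]
        _ = Real.sqrt (p a b e₀ * p a' b' e₀) ^ 2 := by rw [hsq]
        _ = p a b e₀ * p a' b' e₀ := Real.sq_sqrt h6
    rw [hpab a b, hpab a' b', hpab a b', hpab a' b,
      pab_eq heab h1, pab_eq heab h2, pab_eq heab h3, pab_eq heab h4]
    linarith
  · intro h a a' b b'
    by_cases hcom : ∃ e, p a b e ≠ 0 ∧ p a' b' e ≠ 0
    · obtain ⟨e₀, hx, hy⟩ := hcom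
      have h1 : eab a b = some e₀ := (heab a b e₀).mpr hx
      have h2 : eab a' b' = some e₀ := (heab a' b' e₀).mpr hy
      by_cases ha : a = a'
      · subst ha
        exact Finset.sum_congr rfl fun e _ => by rw [mul_comm]
      by_cases hb : b = b'
      · subst hb; rfl
      obtain ⟨heq, hsome, hprod⟩ := h a a' b b' e₀ ha hb h1 h2
      obtain ⟨e₁, h3⟩ := Option.isSome_iff_exists.mp hsome
      have h4 : eab a' b = some e₁ := heq ▸ h3
      rw [sum_sqrt_some heab h3, sum_sqrt_some heab h1]
      rw [hpab a b, hpab a' b', hpab a b', hpab a' b,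
        pab_eq heab h1, pab_eq heab h2, pab_eq heab h3, pab_eq heab h4] at hprod
      rw [show p a b' e₁ * p a' b e₁ = p a b e₀ * p a' b' e₀ by linarith]
    · have hLz : ¬ ∃ e, p a b' e ≠ 0 ∧ p a' b e ≠ 0 := by
        rintro ⟨e₁, hx, hy⟩
        by_cases ha : a = a'
        · subst ha; exact hcom ⟨e₁, hy, hx⟩
        by_cases hb : b = b'
        · subst hb; exact hcom ⟨e₁, hx, hy⟩
        obtain ⟨heq, hsome, -⟩ := h a a' b' b e₁ ha (fun hbb => hb hbb.symm)
          ((heab a b' e₁).mpr hx) ((heab a' b e₁).mpr hy)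
        obtain ⟨e₂, h1⟩ := Option.isSome_iff_exists.mp hsome
        exact hcom ⟨e₂, (heab a b e₂).mp h1, (heab a' b' e₂).mp (heq ▸ h1)⟩
      rw [sum_sqrt_zero hLz, sum_sqrt_zero hcom]
end

section
/- In the 4×5 example, the function f(a,b,c,d,e) := −a − c − e + h(a) − h(d) + h(e) − h(a+b) + h(b+d) + h(c+d) − h(c+d+e), where h(p) = −p·log₂(p), satisfies f(1/10, 1/10, 3/8, 1/40, 2/5) > 0. -/
/-- `h(p) = −p·log₂ p` (with `h(0) = 0`, as `Real.logb 2 0 = 0`). -/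
noncomputable def hbit (p : ℝ) : ℝ := -(p * Real.logb 2 p)

/-- The key-rate expression for the 4×5 example. -/
noncomputable def fkey (a b c d e : ℝ) : ℝ :=
  -a - c - e + hbit a - hbit d + hbit e
    - hbit (a + b) + hbit (b + d) + hbit (c + d) - hbit (c + d + e)

lemma log5_lt : 5 * Real.log 5 < 13 * Real.log 2 := by
  have h : Real.log (5 ^ 5 : ℝ) < Real.log (2 ^ 13 : ℝ) :=
    Real.log_lt_log (by norm_num) (by norm_num)
  rw [Real.log_pow, Real.log_pow] at h
  push_cast at h
  linarith

/-- `f(1/10, 1/10, 3/8, 1/40, 2/5) > 0` (numerically ≈ 0.0347590). -/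
theorem stmt_13 : 0 < fkey (1/10) (1/10) (3/8) (1/40) (2/5) := by
  have l2pos : 0 < Real.log 2 := Real.log_pos (by norm_num)
  have l10 : Real.log (1/10 : ℝ) = -(Real.log 2 + Real.log 5) := by
    rw [show (1/10 : ℝ) = ((2:ℝ)*5)⁻¹ by norm_num, Real.log_inv,
      Real.log_mul (by norm_num) (by norm_num)]
  have l40 : Real.log (1/40 : ℝ) = -(3 * Real.log 2 + Real.log 5) := by
    rw [show (1/40 : ℝ) = ((2:ℝ)^3*5)⁻¹ by norm_num, Real.log_inv,
      Real.log_mul (by norm_num) (by norm_num), Real.log_pow]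
    push_cast; ring
  have l25 : Real.log (2/5 : ℝ) = Real.log 2 - Real.log 5 :=
    Real.log_div (by norm_num) (by norm_num)
  have l5 : Real.log (1/5 : ℝ) = -Real.log 5 := by
    rw [show (1/5 : ℝ) = ((5:ℝ))⁻¹ by norm_num, Real.log_inv]
  have l8 : Real.log (1/8 : ℝ) = -(3 * Real.log 2) := by
    rw [show (1/8 : ℝ) = ((2:ℝ)^3)⁻¹ by norm_num, Real.log_inv, Real.log_pow]
    push_cast; ring
  have l45 : Real.log (4/5 : ℝ) = 2 * Real.log 2 - Real.log 5 := by
    rw [show (4/5 : ℝ) = (2:ℝ)^2/5 by norm_num,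
      Real.log_div (by norm_num) (by norm_num), Real.log_pow]
    push_cast; ring
  have key : fkey (1/10) (1/10) (3/8) (1/40) (2/5)
      = 13/40 - (Real.log 5) / (8 * Real.log 2) := by
    unfold fkey hbit Real.logb
    norm_num [l10, l40, l25, l5, l8, l45]
    field_simp
    ring
  rw [key]
  rw [sub_pos, div_lt_iff₀ (by linarith)]
  linarith [log5_lt]
end
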